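/- Let n ≥ 2 and let f be a non-constant SAGE signomial in n variables that is invariant under the action of S_n by permutation of coordinates. If the real zero set V(f) = {x ∈ ℝ^n : f(x) = 0} is non-empty, then exactly one of the following holds: (1) V(f) is a singleton {(t,…,t)} on the diagonal; (2) V(f) equals the diagonal {(t,…,t) : t ∈ ℝ}; (3) V(f) is an affine hyperplane of the form {x ∈ ℝ^n : Σ_{i=1}^n x_i = τ} for some τ ∈ ℝ. In particular, if a symmetric SAGE signomial has a zero, then it has a zero on the diagonal. -/

import Mathlib

open Finset

noncomputable def dotp {n : ℕ} (a x : Fin n → ℝ) : ℝ := ∑ i, a i * x i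

noncomputable def monom {n : ℕ} (α : Fin n → ℕ) (x : Fin n → ℝ) : ℝ := ∏ i, x i ^ α i

/-- The AGE cone `C_AGE(A, β)`: nonnegative signomials supported on `A ∪ {β}` whose
coefficients on `A` are nonnegative (only the `β`-term may be negative). -/
def IsAGE {n : ℕ} (A : Finset (Fin n → ℝ)) (β : Fin n → ℝ) (f : (Fin n → ℝ) → ℝ) : Prop :=
  ∃ c : (Fin n → ℝ) → ℝ, (∀ α ∈ A, 0 ≤ c α) ∧
    (∀ x, f x = (∑ α ∈ A, c α * Real.exp (dotp α x)) + c β * Real.exp (dotp β x)) ∧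
    (∀ x, 0 ≤ f x)

/-- The SAGE cone `C_SAGE(T) = Σ_{β ∈ T} C_AGE(T \ {β}, β)`. -/
def IsSAGE {n : ℕ} (T : Finset (Fin n → ℝ)) (f : (Fin n → ℝ) → ℝ) : Prop :=
  ∃ g : (Fin n → ℝ) → ((Fin n → ℝ) → ℝ),
    (∀ β ∈ T, IsAGE (T.erase β) β (g β)) ∧ (∀ x, f x = ∑ β ∈ T, g β x)

/-- `f^SAGE = sup {l : f - l ∈ C_SAGE(T ∪ {0})}`, as an extended real number. -/
noncomputable def sageBound {n : ℕ} (T : Finset (Fin n → ℝ)) (f : (Fin n → ℝ) → ℝ) : EReal :=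
  sSup ((fun l : ℝ => (l : EReal)) '' {l : ℝ | IsSAGE (insert 0 T) (fun x => f x - l)})

/-- `f* = inf_{x ∈ ℝⁿ} f(x)`, as an extended real number. -/
noncomputable def infStar {n : ℕ} (f : (Fin n → ℝ) → ℝ) : EReal := ⨅ x, (f x : EReal)

/-- The AG cone `C_AG(A, β)` of nonnegative polynomials with nonnegative coefficients
on `A`, vanishing coefficients on non-even points of `A`, and possibly negative
coefficient on `β`. -/
def IsAG {n : ℕ} (A : Finset (Fin n → ℕ)) (β : Fin n → ℕ) (f : (Fin n → ℝ) → ℝ) : Prop :=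
  ∃ c : (Fin n → ℕ) → ℝ, (∀ α ∈ A, 0 ≤ c α) ∧
    (∀ γ ∈ A, (¬ ∀ i, Even (γ i)) → c γ = 0) ∧
    (∀ x, f x = (∑ α ∈ A, c α * monom α x) + c β * monom β x) ∧
    (∀ x, 0 ≤ f x)

/-- The SONC cone `C_SONC(T) = Σ_{β ∈ T} C_AG(T \ {β}, β)`. -/
def IsSONC {n : ℕ} (T : Finset (Fin n → ℕ)) (f : (Fin n → ℝ) → ℝ) : Prop :=
  ∃ g : (Fin n → ℕ) → ((Fin n → ℝ) → ℝ),
    (∀ β ∈ T, IsAG (T.erase β) β (g β)) ∧ (∀ x, f x = ∑ β ∈ T, g β x)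

/-- `f^SONC = sup {l : f - l ∈ C_SONC(T ∪ {0})}`, as an extended real number. -/
noncomputable def soncBound {n : ℕ} (T : Finset (Fin n → ℕ)) (f : (Fin n → ℝ) → ℝ) : EReal :=
  sSup ((fun l : ℝ => (l : EReal)) '' {l : ℝ | IsSONC (insert 0 T) (fun x => f x - l)})

/-- Action of a permutation on a real vector: `(σ·x) i = x (σ⁻¹ i)`. -/
def permAct {n : ℕ} (σ : Equiv.Perm (Fin n)) (x : Fin n → ℝ) : Fin n → ℝ := fun i => x (σ⁻¹ i)

/-- Action of a permutation on an exponent vector. -/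
def permActN {m : ℕ} (σ : Equiv.Perm (Fin m)) (x : Fin m → ℕ) : Fin m → ℕ := fun i => x (σ⁻¹ i)

/-- The orbit of a vector under the symmetric group, as a finite set. -/
noncomputable def orbitF {n : ℕ} (v : Fin n → ℝ) : Finset (Fin n → ℝ) :=
  Finset.univ.image (fun σ : Equiv.Perm (Fin n) => permAct σ v)

/-- The monomial mean `m_α^{(m)}(x) = (1/m!) Σ_{σ ∈ S_m} x^{σ(α)}`. -/
noncomputable def mmean {m : ℕ} (α : Fin m → ℕ) (x : Fin m → ℝ) : ℝ :=
  (1/(m.factorial : ℝ)) * ∑ σ : Equiv.Perm (Fin m), monom (permActN σ α) x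

/-- Zero sets of symmetric SAGE signomials (n ≥ 2): if nonempty, the zero set is
either a singleton on the diagonal, the diagonal, or an affine hyperplane
`{x : Σ xᵢ = τ}`; in particular, there is a zero on the diagonal. -/
lemma dotp_sub' {n : ℕ} (a x y : Fin n → ℝ) : dotp a (x - y) = dotp a x - dotp a y := by
  simp [dotp, mul_sub, Finset.sum_sub_distrib]

lemma dotp_add' {n : ℕ} (a x y : Fin n → ℝ) : dotp a (x + y) = dotp a x + dotp a y := by
  simp [dotp, mul_add, Finset.sum_add_distrib]

lemma dotp_smul' {n : ℕ} (a : Fin n → ℝ) (r : ℝ) (x : Fin n → ℝ) :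
    dotp a (r • x) = r * dotp a x := by
  simp only [dotp, Pi.smul_apply, smul_eq_mul, Finset.mul_sum]
  exact Finset.sum_congr rfl fun i _ => by ring

lemma dotp_zero' {n : ℕ} (a : Fin n → ℝ) : dotp a 0 = 0 := by simp [dotp]

lemma exp_mid_le (a b : ℝ) : Real.exp ((a + b)/2) ≤ (Real.exp a + Real.exp b)/2 := by
  have h := convexOn_exp.2 (Set.mem_univ a) (Set.mem_univ b)
    (by norm_num : (0:ℝ) ≤ 1/2) (by norm_num : (0:ℝ) ≤ 1/2) (by norm_num : (1:ℝ)/2 + 1/2 = 1)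
  simp only [smul_eq_mul] at h
  calc Real.exp ((a + b)/2) = Real.exp (1/2 * a + 1/2 * b) := by ring_nf
    _ ≤ 1/2 * Real.exp a + 1/2 * Real.exp b := h
    _ = (Real.exp a + Real.exp b)/2 := by ring

lemma exp_mid_lt {a b : ℝ} (hab : a ≠ b) :
    Real.exp ((a + b)/2) < (Real.exp a + Real.exp b)/2 := by
  have h := strictConvexOn_exp.2 (Set.mem_univ a) (Set.mem_univ b) hab
    (by norm_num : (0:ℝ) < 1/2) (by norm_num : (0:ℝ) < 1/2) (by norm_num : (1:ℝ)/2 + 1/2 = 1)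
  simp only [smul_eq_mul] at h
  calc Real.exp ((a + b)/2) = Real.exp (1/2 * a + 1/2 * b) := by ring_nf
    _ < 1/2 * Real.exp a + 1/2 * Real.exp b := h
    _ = (Real.exp a + Real.exp b)/2 := by ring

lemma age_struct {n : ℕ} {A : Finset (Fin n → ℝ)} {β : Fin n → ℝ} {g : (Fin n → ℝ) → ℝ}
    (h : IsAGE A β g) :
    ∃ c : (Fin n → ℝ) → ℝ,
      (∀ x y, g x = 0 → g y = 0 → ∀ α ∈ A, c α ≠ 0 →
          dotp α y - dotp β y = dotp α x - dotp β x) ∧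
      (∀ x y, g x = 0 → (∀ α ∈ A, c α ≠ 0 →
          dotp α y - dotp β y = dotp α x - dotp β x) → g y = 0) := by
  obtain ⟨c, hc0, hrep, hnn⟩ := h
  have hfac : ∀ t, g t = Real.exp (dotp β t) *
      ((∑ α ∈ A, c α * Real.exp (dotp α t - dotp β t)) + c β) := by
    intro t
    rw [hrep t, mul_add, Finset.mul_sum]
    congr 1
    · refine Finset.sum_congr rfl fun α _ => ?_
      rw [Real.exp_sub]
      field_simp
    · ring
  have hiff : ∀ t, g t = 0 ↔ (∑ α ∈ A, c α * Real.exp (dotp α t - dotp β t)) + c β = 0 := by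
    intro t
    rw [hfac t]
    constructor
    · intro h0
      rcases mul_eq_zero.1 h0 with h1 | h1
      · exact absurd h1 (Real.exp_ne_zero _)
      · exact h1
    · intro h0; rw [h0, mul_zero]
  have hFnn : ∀ t, 0 ≤ (∑ α ∈ A, c α * Real.exp (dotp α t - dotp β t)) + c β := by
    intro t
    have h1 := hnn t
    rw [hfac t] at h1
    nlinarith [Real.exp_pos (dotp β t)]
  refine ⟨c, ?_, ?_⟩
  · intro x y hx hy α0 hα0 hcα0
    by_contra hne
    have hx0 := (hiff x).1 hx
    have hy0 := (hiff y).1 hy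
    set m := (1/2 : ℝ) • x + (1/2 : ℝ) • y with hm
    have hdm : ∀ a : Fin n → ℝ, dotp a m - dotp β m =
        ((dotp a x - dotp β x) + (dotp a y - dotp β y))/2 := by
      intro a
      rw [hm, dotp_add', dotp_add', dotp_smul', dotp_smul', dotp_smul', dotp_smul']
      ring
    have hterm : ∀ α ∈ A, c α * Real.exp (dotp α m - dotp β m)
        ≤ c α * ((Real.exp (dotp α x - dotp β x) + Real.exp (dotp α y - dotp β y))/2) := by
      intro α hα
      apply mul_le_mul_of_nonneg_left _ (hc0 α hα)
      rw [hdm α]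
      exact exp_mid_le _ _
    have hstrict : c α0 * Real.exp (dotp α0 m - dotp β m)
        < c α0 * ((Real.exp (dotp α0 x - dotp β x) + Real.exp (dotp α0 y - dotp β y))/2) := by
      apply mul_lt_mul_of_pos_left _ (lt_of_le_of_ne (hc0 α0 hα0) (Ne.symm hcα0))
      rw [hdm α0]
      exact exp_mid_lt (fun h => hne (by linarith))
    have hsum : ∑ α ∈ A, c α * Real.exp (dotp α m - dotp β m)
        < ∑ α ∈ A, c α * ((Real.exp (dotp α x - dotp β x) + Real.exp (dotp α y - dotp β y))/2) :=
      Finset.sum_lt_sum hterm ⟨α0, hα0, hstrict⟩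
    have hsplit : ∑ α ∈ A, c α * ((Real.exp (dotp α x - dotp β x) + Real.exp (dotp α y - dotp β y))/2)
        = ((∑ α ∈ A, c α * Real.exp (dotp α x - dotp β x))
          + (∑ α ∈ A, c α * Real.exp (dotp α y - dotp β y)))/2 := by
      rw [Finset.sum_congr rfl (fun α _ => by
        ring : ∀ α ∈ A, c α * ((Real.exp (dotp α x - dotp β x) + Real.exp (dotp α y - dotp β y))/2)
          = (c α * Real.exp (dotp α x - dotp β x))/2 + (c α * Real.exp (dotp α y - dotp β y))/2)]
      rw [Finset.sum_add_distrib, ← Finset.sum_div, ← Finset.sum_div]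
      ring
    have := hFnn m
    rw [hsplit] at hsum
    linarith
  · intro x y hx heq
    rw [hiff] at hx ⊢
    have hsame : ∑ α ∈ A, c α * Real.exp (dotp α y - dotp β y)
        = ∑ α ∈ A, c α * Real.exp (dotp α x - dotp β x) := by
      refine Finset.sum_congr rfl fun α hα => ?_
      by_cases h0 : c α = 0
      · rw [h0]; ring
      · rw [heq α hα h0]
    rw [hsame]
    exact hx

theorem stmt6 {n : ℕ} (hn : 2 ≤ n) (T : Finset (Fin n → ℝ)) (f : (Fin n → ℝ) → ℝ)
    (hSAGE : IsSAGE T f)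
    (hsym : ∀ σ : Equiv.Perm (Fin n), ∀ x, f (permAct σ x) = f x)
    (hnc : ¬ ∃ k : ℝ, ∀ x, f x = k)
    (hne : {x : Fin n → ℝ | f x = 0}.Nonempty) :
    ((∃ t : ℝ, {x : Fin n → ℝ | f x = 0} = {fun _ => t}) ∨
     ({x : Fin n → ℝ | f x = 0} = {x | ∃ t : ℝ, x = fun _ => t}) ∨
     (∃ τ : ℝ, {x : Fin n → ℝ | f x = 0} = {x | ∑ i, x i = τ})) ∧
    (∃ t : ℝ, f (fun _ => t) = 0) := by
  obtain ⟨x0, hx00⟩ := hne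
  simp only [Set.mem_setOf_eq] at hx00
  obtain ⟨g, hg, hfg⟩ := hSAGE
  have hgnn : ∀ β ∈ T, ∀ x, 0 ≤ g β x := fun β hβ => (hg β hβ).choose_spec.2.2
  have hzero_iff : ∀ y, f y = 0 ↔ ∀ β ∈ T, g β y = 0 := by
    intro y
    rw [hfg y]
    exact Finset.sum_eq_zero_iff_of_nonneg (fun β hβ => hgnn β hβ y)
  have key : ∀ β : Fin n → ℝ, ∃ c : (Fin n → ℝ) → ℝ, β ∈ T →
      ((∀ x y, g β x = 0 → g β y = 0 → ∀ α ∈ T.erase β, c α ≠ 0 →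
          dotp α y - dotp β y = dotp α x - dotp β x) ∧
       (∀ x y, g β x = 0 → (∀ α ∈ T.erase β, c α ≠ 0 →
          dotp α y - dotp β y = dotp α x - dotp β x) → g β y = 0)) := by
    intro β
    by_cases hβ : β ∈ T
    · obtain ⟨c, hc⟩ := age_struct (hg β hβ)
      exact ⟨c, fun _ => hc⟩
    · exact ⟨0, fun h => absurd h hβ⟩
  choose c hc using key
  -- the submodule W
  let W : Submodule ℝ (Fin n → ℝ) :=
    { carrier := {u | ∀ β ∈ T, ∀ α ∈ T.erase β, c β α ≠ 0 → dotp α u - dotp β u = 0}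
      add_mem' := by
        intro a b ha hb β hβ α hα hcα
        rw [dotp_add', dotp_add']
        have h1 := ha β hβ α hα hcα
        have h2 := hb β hβ α hα hcα
        linarith
      zero_mem' := by
        intro β hβ α hα hcα
        rw [dotp_zero', dotp_zero']
        ring
      smul_mem' := by
        intro r a ha β hβ α hα hcα
        rw [dotp_smul', dotp_smul', ← mul_sub, ha β hβ α hα hcα, mul_zero] }
  have hWmem : ∀ u, u ∈ W ↔
      ∀ β ∈ T, ∀ α ∈ T.erase β, c β α ≠ 0 → dotp α u - dotp β u = 0 := fun u => Iff.rfl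
  have hZ : ∀ y, f y = 0 ↔ y - x0 ∈ W := by
    intro y
    rw [hzero_iff y, hWmem]
    constructor
    · intro h β hβ α hα hcα
      have h1 := (hc β hβ).1 x0 y ((hzero_iff x0).1 hx00 β hβ) (h β hβ) α hα hcα
      rw [dotp_sub', dotp_sub']
      linarith
    · intro h β hβ
      apply (hc β hβ).2 x0 y ((hzero_iff x0).1 hx00 β hβ)
      intro α hα hcα
      have h1 := h β hβ α hα hcα
      rw [dotp_sub', dotp_sub'] at h1
      linarith
  have hZmem : ∀ z, f z = 0 → ∀ σ : Equiv.Perm (Fin n), f (permAct σ z) = 0 :=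
    fun z hz σ => by rw [hsym σ z]; exact hz
  have hx0W : ∀ σ : Equiv.Perm (Fin n), permAct σ x0 - x0 ∈ W :=
    fun σ => (hZ _).1 (hZmem _ hx00 σ)
  have hWinv : ∀ (σ : Equiv.Perm (Fin n)), ∀ u ∈ W, permAct σ u ∈ W := by
    intro σ u hu
    have h1 : f (x0 + u) = 0 := (hZ _).2 (by rw [add_sub_cancel_left]; exact hu)
    have h2 : permAct σ (x0 + u) - x0 ∈ W := (hZ _).1 (hZmem _ h1 σ)
    have h4 := W.sub_mem h2 (hx0W σ)
    have h5 : permAct σ (x0 + u) - x0 - (permAct σ x0 - x0) = permAct σ u := by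
      funext i; simp [permAct]
    rwa [h5] at h4
  have hswap : ∀ (k l : Fin n) (u : Fin n → ℝ) (m : Fin n),
      permAct (Equiv.swap k l) u m = u (Equiv.swap k l m) := by
    intro k l u m
    simp [permAct, Equiv.swap_inv]
  have npos : 0 < n := by omega
  let i0 : Fin n := ⟨0, npos⟩
  by_cases hconst : ∀ u ∈ W, ∀ i j : Fin n, u i = u j
  · -- W ⊆ diagonal
    have hx0c : ∀ i j : Fin n, x0 i = x0 j := by
      intro i j
      rcases eq_or_ne i j with rfl | hij
      · rfl
      · have hv := hx0W (Equiv.swap i j)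
        have hvc := hconst _ hv i j
        simp only [Pi.sub_apply, hswap, Equiv.swap_apply_left, Equiv.swap_apply_right] at hvc
        linarith
    have hx0eq : x0 = fun _ => x0 i0 := funext fun i => hx0c i i0
    by_cases hbot : ∀ u ∈ W, u = 0
    · -- Case 1 : singleton
      refine ⟨Or.inl ⟨x0 i0, ?_⟩, ⟨x0 i0, by rw [← hx0eq]; exact hx00⟩⟩
      ext x
      simp only [Set.mem_setOf_eq, Set.mem_singleton_iff]
      rw [hZ x]
      constructor
      · intro h
        have h1 := hbot _ h
        have h2 : x = x0 := by
          have := sub_eq_zero.1 h1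
          exact this
        rw [h2, hx0eq]
      · intro h
        have : x - x0 = 0 := by rw [h, hx0eq]; funext i; simp
        rw [this]; exact W.zero_mem
    · -- Case 2 : diagonal
      push_neg at hbot
      obtain ⟨u, huW, hu0⟩ := hbot
      have hcu : ∀ i : Fin n, u i = u i0 := fun i => hconst u huW i i0
      have hne0 : u i0 ≠ 0 := by
        intro h
        apply hu0
        funext i; rw [hcu i, h]; rfl
      have hDW : ∀ s : ℝ, (fun _ => s : Fin n → ℝ) ∈ W := by
        intro s
        have hrepr : (fun _ => s : Fin n → ℝ) = (s / u i0) • u := by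
          funext i
          simp only [Pi.smul_apply, smul_eq_mul, hcu i]
          field_simp
        rw [hrepr]
        exact W.smul_mem _ huW
      refine ⟨Or.inr (Or.inl ?_), ⟨x0 i0, by rw [← hx0eq]; exact hx00⟩⟩
      ext x
      simp only [Set.mem_setOf_eq]
      rw [hZ x]
      constructor
      · intro h
        refine ⟨x i0, funext fun i => ?_⟩
        have h1 := hconst _ h i i0
        simp only [Pi.sub_apply] at h1
        have h2 := hx0c i i0
        show x i = x i0
        linarith
      · rintro ⟨t, rfl⟩
        have hrepr : (fun _ => t : Fin n → ℝ) - x0 = fun _ => (t - x0 i0) := by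
          funext i
          simp [hx0c i i0]
        rw [hrepr]
        exact hDW _
  · -- non-constant element in W
    push_neg at hconst
    obtain ⟨u, huW, i, j, hij⟩ := hconst
    have hij' : i ≠ j := fun h => hij (by rw [h])
    have hpair : ∀ k l : Fin n, k ≠ l → (Pi.single k (1:ℝ) - Pi.single l 1) ∈ W := by
      intro k l hkl
      obtain ⟨σ, hσi, hσj⟩ : ∃ σ : Equiv.Perm (Fin n), σ i = k ∧ σ j = l := by
        have hkj' : (Equiv.swap i k) j ≠ k := by
          intro h
          have h2 := congrArg (Equiv.swap i k) h
          rw [Equiv.swap_apply_self, Equiv.swap_apply_right] at h2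
          exact hij' h2.symm
        refine ⟨(Equiv.swap i k).trans (Equiv.swap ((Equiv.swap i k) j) l), ?_, ?_⟩
        · rw [Equiv.trans_apply, Equiv.swap_apply_left]
          exact Equiv.swap_apply_of_ne_of_ne (Ne.symm hkj') hkl
        · rw [Equiv.trans_apply]
          exact Equiv.swap_apply_left _ _
      have hik : σ⁻¹ k = i := by rw [← hσi]; exact σ.symm_apply_apply i
      have hjl : σ⁻¹ l = j := by rw [← hσj]; exact σ.symm_apply_apply j
      have hv : permAct σ u ∈ W := hWinv σ u huW
      have hvk : permAct σ u k = u i := by show u (σ⁻¹ k) = u i; rw [hik]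
      have hvl : permAct σ u l = u j := by show u (σ⁻¹ l) = u j; rw [hjl]
      have hw' : permAct σ u - permAct (Equiv.swap k l) (permAct σ u) ∈ W :=
        W.sub_mem hv (hWinv _ _ hv)
      have hrepr : permAct σ u - permAct (Equiv.swap k l) (permAct σ u)
          = (u i - u j) • (Pi.single k (1:ℝ) - Pi.single l 1) := by
        funext m
        simp only [Pi.sub_apply, Pi.smul_apply, smul_eq_mul, hswap]
        rcases eq_or_ne m k with rfl | hmk
        · rw [Equiv.swap_apply_left, hvk, hvl, Pi.single_eq_same, Pi.single_eq_of_ne hkl]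
          ring
        · rcases eq_or_ne m l with rfl | hml
          · rw [Equiv.swap_apply_right, hvk, hvl, Pi.single_eq_same,
              Pi.single_eq_of_ne (Ne.symm hkl)]
            ring
          · rw [Equiv.swap_apply_of_ne_of_ne hmk hml, Pi.single_eq_of_ne hmk,
              Pi.single_eq_of_ne hml]
            ring
      have hsm := W.smul_mem (u i - u j)⁻¹ hw'
      rw [hrepr, smul_smul, inv_mul_cancel₀ (sub_ne_zero.2 hij), one_smul] at hsm
      exact hsm
    have hHW : ∀ w : Fin n → ℝ, ∑ i, w i = 0 → w ∈ W := by
      intro w hw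
      have hdecomp : w = ∑ k, w k • ((Pi.single k (1:ℝ) : Fin n → ℝ) - Pi.single i0 1) := by
        funext m
        rw [Finset.sum_apply]
        have hterm : ∀ k : Fin n, (w k • ((Pi.single k (1:ℝ) : Fin n → ℝ) - Pi.single i0 1) : Fin n → ℝ) m
            = w k * (if m = k then 1 else 0) - w k * (if m = i0 then 1 else 0) := by
          intro k
          simp [Pi.single_apply, mul_sub]
        rw [Finset.sum_congr rfl fun k _ => hterm k, Finset.sum_sub_distrib]
        by_cases hmi : m = i0
        · simp [hmi, hw, ← Finset.sum_mul]
        · simp [hmi]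
      rw [hdecomp]
      apply W.sum_mem
      intro k _
      rcases eq_or_ne k i0 with rfl | hki
      · rw [sub_self, smul_zero]; exact W.zero_mem
      · exact W.smul_mem _ (hpair k i0 hki)
    by_cases hsum0 : ∀ u ∈ W, ∑ i, u i = 0
    · -- Case 3 : hyperplane
      refine ⟨Or.inr (Or.inr ⟨∑ i, x0 i, ?_⟩), ⟨(∑ i, x0 i)/n, ?_⟩⟩
      · ext x
        simp only [Set.mem_setOf_eq]
        rw [hZ x]
        constructor
        · intro h
          have h1 := hsum0 _ h
          simp only [Pi.sub_apply, Finset.sum_sub_distrib] at h1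
          linarith
        · intro h
          apply hHW
          simp only [Pi.sub_apply, Finset.sum_sub_distrib, h, sub_self]
      · rw [hZ]
        apply hHW
        simp only [Pi.sub_apply, Finset.sum_sub_distrib, Finset.sum_const, card_univ,
          Fintype.card_fin, nsmul_eq_mul]
        have hn0 : (n:ℝ) ≠ 0 := by positivity
        field_simp
        ring
    · -- W = ⊤ : contradiction with non-constancy
      push_neg at hsum0
      obtain ⟨v, hvW, hvs⟩ := hsum0
      exfalso
      apply hnc
      refine ⟨0, fun x => ?_⟩
      apply (hZ x).2
      have h1 : (x - x0) - ((∑ i, (x - x0) i)/(∑ i, v i)) • v ∈ W := by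
        apply hHW
        simp only [Pi.sub_apply, Pi.smul_apply, smul_eq_mul, Finset.sum_sub_distrib]
        rw [← Finset.mul_sum]
        field_simp
        ring
      have h2 := W.add_mem h1 (W.smul_mem ((∑ i, (x - x0) i)/(∑ i, v i)) hvW)
      simpa using h2
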